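/- Let φ₁,…,φ_N be independent centered Gaussian random variables with common variance σ², and define the beamforming gain G = (1/N)·|∑_{n=1}^N exp(j φ_n)|². Then E[G] = 1 + (N-1)·e^{-σ²}. -/

import Mathlib

open MeasureTheory ProbabilityTheory Complex Real
open scoped NNReal ENNReal

lemma gaussian_cexp_integral (v : ℝ≥0) :
    ∫ x : ℝ, Complex.exp (Complex.I * x) ∂(gaussianReal 0 v) =
      (Real.exp (-(v:ℝ)/2) : ℂ) := by
  by_cases hv : v = 0
  · subst hv
    simp [gaussianReal_zero_var, integral_dirac]
  · rw [gaussianReal_of_var_ne_zero _ hv]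
    have hvpos : (0:ℝ) < (v:ℝ) := by positivity
    have hd : (gaussianPDF 0 v) = fun x => ((Real.toNNReal (gaussianPDFReal 0 v x) : ℝ≥0) : ℝ≥0∞) := by
      ext x; simp [gaussianPDF, ENNReal.ofReal]
    rw [hd, integral_withDensity_eq_integral_smul
      ((measurable_gaussianPDFReal 0 v).real_toNNReal)]
    have hsm : ∀ x : ℝ, (Real.toNNReal (gaussianPDFReal 0 v x)) • Complex.exp (Complex.I * x)
        = ((√(2 * π * v))⁻¹ : ℂ) * (Complex.exp (Complex.I * (1:ℂ) * x) * Complex.exp (-(↑(1/(2*(v:ℝ))) : ℂ) * x ^ 2)) := by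
      intro x
      have hvne : (((v:ℝ)):ℂ) ≠ 0 := by exact_mod_cast hvpos.ne'
      have h0 : ((Real.toNNReal (gaussianPDFReal 0 v x)) : ℝ) = gaussianPDFReal 0 v x :=
        Real.coe_toNNReal _ (gaussianPDFReal_nonneg 0 v x)
      rw [NNReal.smul_def, real_smul, h0, gaussianPDFReal]
      push_cast
      rw [mul_assoc, mul_assoc, ← Complex.exp_add, ← Complex.exp_add]
      congr 1
      field_simp
      ring_nf
    simp_rw [hsm]
    rw [integral_const_mul, fourierIntegral_gaussian (by simp; positivity) 1]
    have h1 : ((π:ℂ) / ((1/(2*(v:ℝ)) : ℝ) : ℂ)) ^ (1/2 : ℂ) = (√(2 * π * v) : ℂ) := by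
      have : ((π:ℂ) / ((1/(2*(v:ℝ)) : ℝ) : ℂ)) = ((2 * π * v : ℝ) : ℂ) := by
        push_cast; field_simp
      rw [this, show (1/2:ℂ) = ((1/2:ℝ):ℂ) by norm_num,
        ← Complex.ofReal_cpow (by positivity)]
      rw [Real.sqrt_eq_rpow]
    rw [h1]
    have h2 : -(1:ℂ)^2 / (4 * ((1/(2*(v:ℝ)) : ℝ) : ℂ)) = ((-(v:ℝ)/2 : ℝ) : ℂ) := by
      push_cast; field_simp; ring
    rw [h2, ← Complex.ofReal_exp, ← mul_assoc,
      inv_mul_cancel₀ (Complex.ofReal_ne_zero.mpr (by positivity)), one_mul]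

lemma gaussian_cexp_integrable (v : ℝ≥0) :
    Integrable (fun x : ℝ => Complex.exp (Complex.I * x)) (gaussianReal 0 v) := by
  refine Integrable.mono' (integrable_const 1)
    ((Complex.measurable_exp.comp
      (measurable_const.mul Complex.measurable_ofReal)).aestronglyMeasurable)
    (ae_of_all _ fun x => ?_)
  simp [Complex.norm_exp]

lemma gaussian_cos_integral (v : ℝ≥0) :
    ∫ x : ℝ, Real.cos x ∂(gaussianReal 0 v) = Real.exp (-(v:ℝ)/2) := by
  have h := gaussian_cexp_integral v
  have h2 := integral_re (gaussian_cexp_integrable v)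
  rw [h] at h2
  simpa [mul_comm Complex.I, Complex.exp_ofReal_mul_I_re, -Complex.ofReal_exp] using h2

lemma gaussian_sin_integral (v : ℝ≥0) :
    ∫ x : ℝ, Real.sin x ∂(gaussianReal 0 v) = 0 := by
  have h := gaussian_cexp_integral v
  have h2 := integral_im (gaussian_cexp_integrable v)
  rw [h] at h2
  simpa [mul_comm Complex.I, Complex.exp_ofReal_mul_I_im, -Complex.ofReal_exp] using h2

open MeasureTheory ProbabilityTheory
open scoped NNReal BigOperators

theorem bf_gain_mean
    {Ω : Type*} [MeasurableSpace Ω] {P : Measure Ω} [IsProbabilityMeasure P]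
    (N : ℕ) (hN : 1 ≤ N) (σ2 : ℝ≥0) (φ : Fin N → Ω → ℝ)
    (hmeas : ∀ i, Measurable (φ i))
    (hindep : iIndepFun φ P)
    (hgauss : ∀ i, Measure.map (φ i) P = gaussianReal 0 σ2) :
    (∫ ω, (1 / (N : ℝ)) *
        (‖∑ n : Fin N, Complex.exp (Complex.I * (φ n ω : ℂ))‖)^2 ∂P)
      = 1 + ((N : ℝ) - 1) * Real.exp (-(σ2 : ℝ)) := by
  set r : ℝ := Real.exp (-(σ2:ℝ)/2) with hr
  set E : ℝ := Real.exp (-(σ2:ℝ)) with hE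
  have hrE : r * r = E := by
    rw [hr, hE, ← Real.exp_add]; ring_nf
  -- integrals of cos and sin of φ i
  have hc : ∀ i, ∫ ω, Real.cos (φ i ω) ∂P = r := by
    intro i
    rw [← integral_map (hmeas i).aemeasurable Real.measurable_cos.aestronglyMeasurable,
      hgauss i, gaussian_cos_integral]
  have hs : ∀ i, ∫ ω, Real.sin (φ i ω) ∂P = 0 := by
    intro i
    rw [← integral_map (hmeas i).aemeasurable Real.measurable_sin.aestronglyMeasurable,
      hgauss i, gaussian_sin_integral]
  have hcm : ∀ i, Measurable fun ω => Real.cos (φ i ω) :=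
    fun i => Real.measurable_cos.comp (hmeas i)
  have hsm : ∀ i, Measurable fun ω => Real.sin (φ i ω) :=
    fun i => Real.measurable_sin.comp (hmeas i)
  have hci : ∀ i, Integrable (fun ω => Real.cos (φ i ω)) P := by
    intro i
    exact Integrable.mono' (integrable_const 1) (hcm i).aestronglyMeasurable
      (ae_of_all _ fun ω => by simpa using Real.abs_cos_le_one _)
  have hsi : ∀ i, Integrable (fun ω => Real.sin (φ i ω)) P := by
    intro i
    exact Integrable.mono' (integrable_const 1) (hsm i).aestronglyMeasurable
      (ae_of_all _ fun ω => by simpa using Real.abs_sin_le_one _)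
  -- the summands
  set t : Fin N → Fin N → Ω → ℝ := fun n m ω =>
    Real.cos (φ n ω) * Real.cos (φ m ω) + Real.sin (φ n ω) * Real.sin (φ m ω) with ht
  have hti : ∀ n m, Integrable (t n m) P := by
    intro n m
    refine Integrable.mono' (integrable_const 2)
      (((hcm n).mul (hcm m)).add ((hsm n).mul (hsm m))).aestronglyMeasurable
      (ae_of_all _ fun ω => ?_)
    simp only [Real.norm_eq_abs, ht]
    refine (abs_add_le _ _).trans ?_
    rw [abs_mul, abs_mul]
    nlinarith [Real.abs_cos_le_one (φ n ω), Real.abs_cos_le_one (φ m ω),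
      Real.abs_sin_le_one (φ n ω), Real.abs_sin_le_one (φ m ω),
      abs_nonneg (Real.cos (φ n ω)), abs_nonneg (Real.cos (φ m ω)),
      abs_nonneg (Real.sin (φ n ω)), abs_nonneg (Real.sin (φ m ω))]
  -- pointwise identity
  have key : ∀ ω, (‖∑ n : Fin N, Complex.exp (Complex.I * (φ n ω : ℂ))‖)^2
      = ∑ n : Fin N, ∑ m : Fin N, t n m ω := by
    intro ω
    rw [Complex.sq_norm, Complex.normSq_apply, Complex.re_sum, Complex.im_sum]
    simp only [mul_comm Complex.I, Complex.exp_ofReal_mul_I_re, Complex.exp_ofReal_mul_I_im]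
    rw [Finset.sum_mul_sum, Finset.sum_mul_sum, ← Finset.sum_add_distrib]
    refine Finset.sum_congr rfl fun n _ => ?_
    rw [← Finset.sum_add_distrib]
  -- value of each integral
  have hval : ∀ n m : Fin N, ∫ ω, t n m ω ∂P = if n = m then 1 else E := by
    intro n m
    by_cases hnm : n = m
    · subst hnm
      simp only [if_pos rfl]
      have : (fun ω => t n n ω) = fun _ => (1:ℝ) := by
        funext ω
        simp only [ht, ← sq]
        exact Real.cos_sq_add_sin_sq _
      rw [this, integral_const]
      simp
    · rw [if_neg hnm]
      have hij := hindep.indepFun hnm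
      have hcc : IndepFun (fun ω => Real.cos (φ n ω)) (fun ω => Real.cos (φ m ω)) P :=
        hij.comp Real.measurable_cos Real.measurable_cos
      have hss : IndepFun (fun ω => Real.sin (φ n ω)) (fun ω => Real.sin (φ m ω)) P :=
        hij.comp Real.measurable_sin Real.measurable_sin
      have h1 : ∫ ω, Real.cos (φ n ω) * Real.cos (φ m ω) ∂P = r * r := by
        have := hcc.integral_fun_mul_eq_mul_integral (hci n).aestronglyMeasurable (hci m).aestronglyMeasurable
        rw [hc n, hc m] at this
        exact this
      have h2 : ∫ ω, Real.sin (φ n ω) * Real.sin (φ m ω) ∂P = 0 := by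
        have := hss.integral_fun_mul_eq_mul_integral (hsi n).aestronglyMeasurable (hsi m).aestronglyMeasurable
        rw [hs n, hs m] at this
        simpa using this
      have hadd : ∫ ω, t n m ω ∂P
          = (∫ ω, Real.cos (φ n ω) * Real.cos (φ m ω) ∂P)
            + ∫ ω, Real.sin (φ n ω) * Real.sin (φ m ω) ∂P :=
        integral_add (hcc.integrable_mul (hci n) (hci m))
          (hss.integrable_mul (hsi n) (hsi m))
      rw [hadd, h1, h2, hrE, add_zero]
  -- final computation
  have hN0 : (N:ℝ) ≠ 0 := Nat.cast_ne_zero.mpr (by omega)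
  have hswap : ∀ n : Fin N, ∫ ω, ∑ m : Fin N, t n m ω ∂P = ∑ m : Fin N, ∫ ω, t n m ω ∂P :=
    fun n => integral_finset_sum _ (fun m _ => hti n m)
  have hinner : ∀ n : Fin N, (∑ m : Fin N, if n = m then (1:ℝ) else E)
      = (N:ℝ) * E + (1 - E) := by
    intro n
    have hsplit : ∀ m : Fin N, (if n = m then (1:ℝ) else E)
        = (if n = m then (1 - E) else 0) + E := by
      intro m; by_cases h : n = m <;> simp [h]
    simp_rw [hsplit, Finset.sum_add_distrib, Finset.sum_ite_eq, Finset.sum_const]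
    simp [Finset.card_univ]
    ring
  simp_rw [key]
  rw [integral_const_mul,
    integral_finset_sum _ (fun n _ => integrable_finset_sum _ (fun m _ => hti n m))]
  simp_rw [hswap, hval, hinner, Finset.sum_const, Finset.card_univ, Fintype.card_fin,
    nsmul_eq_mul]
  field_simp
  ring
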